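/- Let p be a prime, n ≥ 1, α_1,…,α_n ≥ 1, and let B be a finite additive commutative group whose cardinality is a power of p. Let f : ℤ^n → B be a function that is p^{α_j}-periodic in the j-th variable for each j, i.e. f(x + p^{α_j}·e_j) = f(x) for all x ∈ ℤ^n and all j. Then f is polyfractal: there exists a finitely supported family c : (Fin n → ℕ) → B with f(x) = Σ_δ (∏_{j} binom(x_j, δ_j)) • c(δ) for all x ∈ ℤ^n. -/

import Mathlib

open Finset Function

noncomputable def ibinom (x : ℤ) (δ : ℕ) : ℤ := Ring.choose x δ

open scoped fwdDiff

noncomputable abbrev d1 {B : Type*} [AddCommGroup B] : (ℤ → B) → (ℤ → B) := fwdDiff (1:ℤ)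

namespace Stmt10

variable {B : Type*} [AddCommGroup B]

lemma ibinom_zero (a : ℕ) : ibinom 0 (a + 1) = 0 := by
  simpa [ibinom] using Ring.choose_zero_succ ℤ a

lemma ibinom_zero' : ibinom 0 0 = 1 := by simp [ibinom, Ring.choose_zero_right]

lemma ibinom_pascal (x : ℤ) (a : ℕ) :
    ibinom (x + 1) (a + 1) = ibinom x a + ibinom x (a + 1) :=
  Ring.choose_succ_succ x a

lemma const_of_fwdDiff {g : ℤ → B} (h : ∀ t : ℤ, d1 g t = 0) : ∀ x, g x = g 0 := by
  have h' : ∀ t : ℤ, g (t + 1) = g t := by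
    intro t; have := h t; simp only [fwdDiff] at this
    have := sub_eq_zero.mp this; exact this
  intro x
  induction x using Int.induction_on with
  | zero => rfl
  | succ k ih => rw [h' k] ; exact ih
  | pred k ih => rw [← ih, ← h' (-(k:ℤ) - 1)]; norm_num

lemma newton : ∀ (N : ℕ) (g : ℤ → B), d1^[N] g = 0 →
    ∀ x, g x = ∑ a ∈ Finset.range N, ibinom x a • (d1^[a] g) 0 := by
  intro N
  induction N with
  | zero => intro g h x; simpa using congrFun h x
  | succ N ih =>
    intro g h x
    set G : ℤ → B := fun x => ∑ a ∈ Finset.range (N+1), ibinom x a • (d1^[a] g) 0 with hG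
    have hdg : ∀ t, d1 g t = ∑ a ∈ Finset.range N,
        ibinom t a • (d1^[a+1] g) 0 := by
      intro t
      have h' : d1^[N] (d1 g) = 0 := by
        funext u; rw [← Function.iterate_succ_apply]; exact congrFun h u
      simp only [Function.iterate_succ_apply]
      exact ih (d1 g) h' t
    have hdG : ∀ t, d1 G t = ∑ a ∈ Finset.range N,
        ibinom t a • (d1^[a+1] g) 0 := by
      intro t
      have hGu : ∀ u, G u = ∑ a ∈ Finset.range (N+1), ibinom u a • (d1^[a] g) 0 :=
        fun u => rfl
      have : d1 G t = ∑ a ∈ Finset.range (N+1),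
          (ibinom (t+1) a - ibinom t a) • (d1^[a] g) 0 := by
        show G (t + 1) - G t = _
        rw [hGu, hGu, ← Finset.sum_sub_distrib]
        simp only [sub_smul]
      rw [this, Finset.sum_range_succ']
      simp only [ibinom_pascal, add_sub_cancel_right]
      norm_num [ibinom]
    have hconst : ∀ t, g t - G t = g 0 - G 0 := by
      apply const_of_fwdDiff (g := fun t => g t - G t)
      intro t
      have : d1 (fun t => g t - G t) t = d1 g t - d1 G t := by
        simp only [fwdDiff]; abel
      rw [this, hdg, hdG, sub_self]
    have hG0 : G 0 = g 0 := by
      show (∑ a ∈ Finset.range (N+1), ibinom (0:ℤ) a • (d1^[a] g) 0) = g 0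
      rw [Finset.sum_range_succ']
      simp [ibinom_zero, ibinom_zero']
    have := hconst x
    rw [hG0, sub_self] at this
    have := sub_eq_zero.mp this
    simpa [hG] using this
section Kill
variable {M : Type*} [AddCommMonoid M] {B : Type*} [AddCommGroup B]

lemma step_dvd (p : ℕ) (hp : p.Prime) (a : ℕ) (ha : 1 ≤ a)
    (h : M) (f : M → B) (hf : ∀ y, f (y + (p ^ a) • h) = f y) :
    ∃ g : M → B, (∀ y, g (y + (p ^ a) • h) = g y) ∧
      (fwdDiff h)^[p ^ a] f = (p : ℤ) • g := by
  set T := p ^ a with hT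
  have hT1 : 1 ≤ T := Nat.one_le_pow _ _ hp.pos
  set zc : ℕ → ℤ := fun i => (-1 : ℤ) ^ (T - i) * (T.choose i) with hzc
  set c' : ℕ → ℤ := fun i => if i = 0 then zc 0 + 1 else zc i with hc'
  have hexp : ∀ y, (fwdDiff h)^[T] f y = ∑ k ∈ Finset.range T, c' k • f (y + k • h) := by
    intro y
    rw [fwdDiff_iter_eq_sum_shift, Finset.sum_range_succ]
    have h1 : ((-1 : ℤ) ^ (T - T) * (T.choose T)) • f (y + T • h) = f y := by
      simp [hf y]
    rw [h1]
    have h2 : ∀ k ∈ Finset.range T, c' k • f (y + k • h) =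
        ((-1 : ℤ) ^ (T - k) * (T.choose k)) • f (y + k • h)
          + (if k = 0 then f (y + k • h) else 0) := by
      intro k _
      by_cases hk : k = 0
      · subst hk; simp [hc', hzc, add_smul]
      · simp [hc', hzc, if_neg hk]
    rw [Finset.sum_congr rfl h2, Finset.sum_add_distrib, Finset.sum_ite_eq' (Finset.range T) 0
      (fun k => f (y + k • h))]
    simp [Finset.mem_range.mpr hT1]
  have hdvd : ∀ i, i < T → (p : ℤ) ∣ c' i := by
    intro i hi
    by_cases hi0 : i = 0
    · subst hi0
      simp only [hc', if_pos rfl, hzc, Nat.sub_zero, Nat.choose_zero_right, Nat.cast_one, mul_one]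
      rcases hp.eq_two_or_odd' with h2 | hodd
      · subst h2
        have : Even T := by
          exact (Nat.even_pow).mpr ⟨even_iff_two_dvd.mpr dvd_rfl, by omega⟩
        rw [this.neg_one_pow]
        norm_num
      · have : Odd T := hodd.pow
        rw [this.neg_one_pow]
        simp
    · simp only [hc', if_neg hi0, hzc]
      have : p ∣ T.choose i := hp.dvd_choose_pow hi0 (by omega)
      exact Dvd.dvd.mul_left (Int.natCast_dvd_natCast.mpr this) _
  set d : ℕ → ℤ := fun i => c' i / p with hd
  have hpd : ∀ i, i < T → c' i = (p : ℤ) * d i := fun i hi =>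
    (Int.mul_ediv_cancel' (hdvd i hi)).symm
  refine ⟨fun y => ∑ k ∈ Finset.range T, d k • f (y + k • h), ?_, ?_⟩
  · intro y
    apply Finset.sum_congr rfl
    intro k _
    rw [add_right_comm, hf]
  · funext y
    rw [hexp y]
    show _ = (p : ℤ) • ∑ k ∈ Finset.range T, d k • f (y + k • h)
    rw [Finset.smul_sum]
    apply Finset.sum_congr rfl
    intro k hk
    rw [smul_smul, ← hpd k (Finset.mem_range.mp hk)]

lemma kill (p : ℕ) (hp : p.Prime) (a : ℕ) (ha : 1 ≤ a)
    (h : M) (f : M → B) (hf : ∀ y, f (y + (p ^ a) • h) = f y)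
    (k : ℕ) (hk : ∀ b : B, (p : ℤ) ^ k • b = 0) :
    (fwdDiff h)^[k * p ^ a] f = 0 := by
  set T := p ^ a with hT
  have claim : ∀ m : ℕ, ∃ g : M → B, (∀ y, g (y + T • h) = g y) ∧
      (fwdDiff h)^[m * T] f = ((p : ℤ) ^ m) • g := by
    intro m
    induction m with
    | zero => exact ⟨f, hf, by simp⟩
    | succ m ih =>
      obtain ⟨g, hg, hEq⟩ := ih
      obtain ⟨g', hg', hstep⟩ := step_dvd p hp a ha h g hg
      refine ⟨g', hg', ?_⟩
      have : (m + 1) * T = T + m * T := by ring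
      rw [this, Function.iterate_add_apply, hEq, fwdDiff_iter_const_smul, hstep,
        smul_smul, ← pow_succ]
  obtain ⟨g, _, hEq⟩ := claim k
  rw [hEq]
  funext y
  simp only [Pi.smul_apply]
  exact hk (g y)

end Kill
section Multi
variable {B : Type*} [AddCommGroup B]

lemma fwdDiff_iter_zero {M : Type*} [AddCommMonoid M] (h : M) (a : ℕ) :
    (fwdDiff h)^[a] (0 : M → B) = 0 := by
  induction a with
  | zero => rfl
  | succ a ih =>
    rw [Function.iterate_succ_apply, show fwdDiff h (0 : M → B) = 0 by
      funext x; simp [fwdDiff], ih]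

lemma fwdDiff_comm {M : Type*} [AddCommMonoid M] (h h' : M) (f : M → B) :
    fwdDiff h (fwdDiff h' f) = fwdDiff h' (fwdDiff h f) := by
  funext x
  simp only [fwdDiff]
  rw [add_right_comm]
  abel

lemma fwdDiff_iter_comm {M : Type*} [AddCommMonoid M] (h h' : M) (a b : ℕ) (f : M → B) :
    (fwdDiff h)^[a] ((fwdDiff h')^[b] f) = (fwdDiff h')^[b] ((fwdDiff h)^[a] f) := by
  have hc : Function.Commute (fwdDiff (G := B) h) (fwdDiff h') := fun f => fwdDiff_comm h h' f
  exact ((hc.iterate_left a).iterate_right b) f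

lemma cons_add_single_zero {m : ℕ} (t : ℤ) (y : Fin m → ℤ) :
    (Fin.cons t y : Fin (m+1) → ℤ) + Pi.single (0 : Fin (m+1)) (1:ℤ) = Fin.cons (t+1) y := by
  funext i
  refine Fin.cases ?_ ?_ i
  · simp
  · intro i
    simp [Pi.single_eq_of_ne (Fin.succ_ne_zero i)]

lemma cons_zero_add_single_succ {m : ℕ} (y : Fin m → ℤ) (j : Fin m) :
    (Fin.cons (0:ℤ) y : Fin (m+1) → ℤ) + Pi.single j.succ (1:ℤ) = Fin.cons 0 (y + Pi.single j 1) := by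
  funext i
  refine Fin.cases ?_ ?_ i
  · simp [Pi.single_eq_of_ne (Fin.succ_ne_zero j).symm]
  · intro i
    simp only [Pi.add_apply, Fin.cons_succ]
    congr 1
    by_cases hij : i = j
    · subst hij; simp
    · rw [Pi.single_eq_of_ne hij, Pi.single_eq_of_ne
        (fun hh => hij (Fin.succ_injective _ hh))]

lemma bridge1 {m : ℕ} : ∀ (a : ℕ) (F : (Fin (m+1) → ℤ) → B) (y : Fin m → ℤ) (t : ℤ),
    d1^[a] (fun u => F (Fin.cons u y)) t =
      ((fwdDiff (Pi.single (0 : Fin (m+1)) (1:ℤ)))^[a] F) (Fin.cons t y) := by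
  intro a
  induction a with
  | zero => intro F y t; rfl
  | succ a ih =>
    intro F y t
    rw [Function.iterate_succ_apply, Function.iterate_succ_apply]
    have heq : d1 (fun u => F (Fin.cons u y)) =
        fun u => (fwdDiff (Pi.single (0 : Fin (m+1)) (1:ℤ)) F) (Fin.cons u y) := by
      funext u
      show F (Fin.cons (u+1) y) - F (Fin.cons u y)
        = F (Fin.cons u y + Pi.single 0 1) - F (Fin.cons u y)
      rw [cons_add_single_zero]
    rw [heq, ih]

lemma bridge2 {m : ℕ} : ∀ (M : ℕ) (F : (Fin (m+1) → ℤ) → B) (j : Fin m) (y : Fin m → ℤ),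
    ((fwdDiff (Pi.single j (1:ℤ)))^[M] (fun z => F (Fin.cons 0 z))) y =
      ((fwdDiff (Pi.single j.succ (1:ℤ)))^[M] F) (Fin.cons 0 y) := by
  intro M
  induction M with
  | zero => intro F j y; rfl
  | succ M ih =>
    intro F j y
    rw [Function.iterate_succ_apply, Function.iterate_succ_apply]
    have heq : fwdDiff (Pi.single j (1:ℤ)) (fun z => F (Fin.cons 0 z)) =
        fun z => (fwdDiff (Pi.single j.succ (1:ℤ)) F) (Fin.cons 0 z) := by
      funext z
      show F (Fin.cons 0 (z + Pi.single j 1)) - F (Fin.cons 0 z)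
        = F (Fin.cons 0 z + Pi.single j.succ 1) - F (Fin.cons 0 z)
      rw [cons_zero_add_single_succ]
    rw [heq, ih]

lemma rep : ∀ (m : ℕ) (f : (Fin m → ℤ) → B),
    (∀ j : Fin m, ∃ N, (fwdDiff (Pi.single j (1:ℤ)))^[N] f = 0) →
    ∃ (s : Finset (Fin m → ℕ)) (c : (Fin m → ℕ) → B),
      ∀ x, f x = ∑ δ ∈ s, (∏ j, ibinom (x j) (δ j)) • c δ := by
  intro m
  induction m with
  | zero =>
    intro f _
    refine ⟨{fun _ => 0}, fun _ => f (fun _ => 0), ?_⟩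
    intro x
    have hx : x = fun _ => 0 := funext fun i => i.elim0
    simp [hx]
  | succ m IH =>
    intro f hf
    classical
    obtain ⟨N, hN⟩ := hf 0
    have hrep : ∀ a : ℕ, ∃ (s : Finset (Fin m → ℕ)) (c : (Fin m → ℕ) → B), ∀ y : Fin m → ℤ,
        ((fwdDiff (Pi.single (0 : Fin (m+1)) (1:ℤ)))^[a] f) (Fin.cons 0 y)
          = ∑ δ ∈ s, (∏ j, ibinom (y j) (δ j)) • c δ := by
      intro a
      apply IH
      intro j
      obtain ⟨M, hM⟩ := hf j.succ
      refine ⟨M, ?_⟩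
      funext y
      rw [bridge2 M _ j y, fwdDiff_iter_comm, hM, fwdDiff_iter_zero]
      rfl
    choose s c hc using hrep
    set t : Finset (Fin m → ℕ) := (Finset.range N).biUnion s with ht
    set c'' : ℕ → (Fin m → ℕ) → B := fun a δ => if δ ∈ s a then c a δ else 0 with hc''
    have hc2 : ∀ a, a < N → ∀ y : Fin m → ℤ,
        ((fwdDiff (Pi.single (0 : Fin (m+1)) (1:ℤ)))^[a] f) (Fin.cons 0 y)
          = ∑ δ ∈ t, (∏ j, ibinom (y j) (δ j)) • c'' a δ := by
      intro a ha y
      rw [hc a y]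
      have h1 : ∀ δ ∈ s a, (∏ j, ibinom (y j) (δ j)) • c a δ
          = (∏ j, ibinom (y j) (δ j)) • c'' a δ := by
        intro δ hδ
        rw [hc'']
        simp [if_pos hδ]
      rw [Finset.sum_congr rfl h1]
      apply Finset.sum_subset
      · exact Finset.subset_biUnion_of_mem s (Finset.mem_range.mpr ha)
      · intro δ _ hδ
        rw [hc'']
        simp [if_neg hδ]
    have hnewton : ∀ x : Fin (m+1) → ℤ, f x = ∑ a ∈ Finset.range N,
        ibinom (x 0) a • ((fwdDiff (Pi.single (0 : Fin (m+1)) (1:ℤ)))^[a] f)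
          (Fin.cons 0 (Fin.tail x)) := by
      intro x
      have hzero : d1^[N] (fun u => f (Fin.cons u (Fin.tail x))) = 0 := by
        funext u
        rw [bridge1, hN]
        rfl
      have h1 := newton N (fun u => f (Fin.cons u (Fin.tail x))) hzero (x 0)
      simp only [Fin.cons_self_tail] at h1
      rw [h1]
      apply Finset.sum_congr rfl
      intro a _
      rw [bridge1]
    refine ⟨(Finset.range N ×ˢ t).image (fun q => Fin.cons q.1 q.2),
      fun ρ => c'' (ρ 0) (Fin.tail ρ), ?_⟩
    intro x
    rw [hnewton x]
    rw [Finset.sum_image (by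
      intro q1 _ q2 _ hq
      have h0 : q1.1 = q2.1 := by
        have := congrFun hq 0
        simpa using this
      have ht' : q1.2 = q2.2 := by
        have := congrArg Fin.tail hq
        simpa [Fin.tail_cons] using this
      exact Prod.ext h0 ht')]
    rw [Finset.sum_product]
    apply Finset.sum_congr rfl
    intro a ha
    rw [hc2 a (Finset.mem_range.mp ha), Finset.smul_sum]
    apply Finset.sum_congr rfl
    intro δ hδ
    rw [smul_smul]
    congr 1
    rw [Fin.prod_univ_succ]
    simp [Fin.tail]

end Multi
end Stmt10

/-- If `B` is a finite commutative `p`-group and `f : ℤ^n → B` is `p^{α_j}`-periodic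
in the `j`-th variable for each `j`, then `f` is polyfractal. -/
theorem stmt_10 (p : ℕ) (hp : p.Prime) (n : ℕ) (hn : 1 ≤ n) (α : Fin n → ℕ)
    (hα : ∀ j, 1 ≤ α j)
    (B : Type*) [AddCommGroup B] [Finite B] (hB : ∃ k : ℕ, Nat.card B = p ^ k)
    (f : (Fin n → ℤ) → B)
    (hper : ∀ (x : Fin n → ℤ) (j : Fin n),
      f (Function.update x j (x j + p ^ α j)) = f x) :
    ∃ c : (Fin n → ℕ) →₀ B,
      ∀ x : Fin n → ℤ, f x = c.sum fun δ b => (∏ j, ibinom (x j) (δ j)) • b := by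
  classical
  obtain ⟨k, hk⟩ := hB
  have hkill : ∀ b : B, (p : ℤ) ^ k • b = 0 := by
    intro b
    have h1 : (Nat.card B) • b = 0 := card_nsmul_eq_zero'
    have h2 : (p : ℤ) ^ k • b = (p ^ k : ℕ) • b := by
      rw [← natCast_zsmul]
      push_cast
      ring_nf
    rw [h2, ← hk]
    exact h1
  have hd : ∀ j : Fin n, ∃ N, (fwdDiff (Pi.single j (1:ℤ)))^[N] f = 0 := by
    intro j
    refine ⟨k * p ^ α j, Stmt10.kill p hp (α j) (hα j) _ f ?_ k hkill⟩
    intro y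
    have hupd : y + (p ^ α j) • Pi.single j (1:ℤ)
        = Function.update y j (y j + (p : ℤ) ^ α j) := by
      funext i
      by_cases hij : i = j
      · subst hij
        simp only [Pi.add_apply, Pi.smul_apply, Pi.single_eq_same, Function.update_self]
        congr 1
        simp only [nsmul_eq_mul, mul_one]
        push_cast
        ring
      · simp [Function.update_of_ne hij, Pi.single_eq_of_ne hij]
    rw [hupd, hper y j]
  obtain ⟨s, c, hc⟩ := Stmt10.rep n f hd
  set g : (Fin n → ℕ) → B := fun δ => if δ ∈ s then c δ else 0 with hg
  have hgsupp : ∀ δ, g δ ≠ 0 → δ ∈ s := by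
    intro δ h
    by_contra hs
    simp [hg, hs] at h
  refine ⟨Finsupp.onFinset s g hgsupp, ?_⟩
  intro x
  rw [hc x, Finsupp.sum]
  have h1 : ∀ δ ∈ s, (∏ j, ibinom (x j) (δ j)) • c δ
      = (∏ j, ibinom (x j) (δ j)) • (Finsupp.onFinset s g hgsupp) δ := by
    intro δ hδ
    have h2 : (Finsupp.onFinset s g hgsupp) δ = c δ := by
      rw [Finsupp.onFinset_apply, hg]
      exact if_pos hδ
    rw [h2]
  rw [Finset.sum_congr rfl h1]
  symm
  apply Finset.sum_subset
  · exact Finsupp.support_onFinset_subset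
  · intro δ hδs hδ
    rw [Finsupp.notMem_support_iff.mp hδ, smul_zero]
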